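/- Let r ∈ (0,1) and let p ∈ 𝒱_r be given by p(z) = ∫_𝕋 K_r(z/ξ) dμ₁(ξ) + ∫_𝕋 [1 − K_r(rξ/z)] dμ₂(ξ) with μ₁, μ₂ positive Borel measures on the unit circle 𝕋 with μ₁(𝕋) + μ₂(𝕋) = 1. Then for all z ∈ 𝔸_r, −Re p(z) ≤ (K_r(r/|z|) − 1)·μ₂(𝕋) ≤ 4r(1−|z|)·μ₂(𝕋)/((|z|−r)(1−r)²). -/

import Mathlib

open Complex Set MeasureTheory

/-- The Villat kernel `K_r(z) = 1 + 2 ∑_{k≥1} (z^k − r^{2k} z^{−k})/(1 − r^{2k})`. -/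
noncomputable def villatK (r : ℝ) (z : ℂ) : ℂ :=
  1 + 2 * ∑' k : ℕ,
    ((z ^ (k + 1) - (r : ℂ) ^ (2 * (k + 1)) * z⁻¹ ^ (k + 1)) /
      (1 - (r : ℂ) ^ (2 * (k + 1))))

/-- `p` belongs to the class `𝒱_r`, represented by positive Borel measures `μ₁, μ₂` on the
unit circle with `μ₁(𝕋) + μ₂(𝕋) = 1`, via the Villat–Stieltjes formula. -/
structure IsVillatRep (r : ℝ) (μ₁ μ₂ : Measure ℂ) (p : ℂ → ℂ) : Prop where
  finite₁ : IsFiniteMeasure μ₁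
  finite₂ : IsFiniteMeasure μ₂
  circle₁ : μ₁ {ξ : ℂ | ‖ξ‖ ≠ 1} = 0
  circle₂ : μ₂ {ξ : ℂ | ‖ξ‖ ≠ 1} = 0
  mass : (μ₁ Set.univ).toReal + (μ₂ Set.univ).toReal = 1
  repr : ∀ z : ℂ, r < ‖z‖ → ‖z‖ < 1 →
    p z = (∫ ξ, villatK r (z / ξ) ∂μ₁) + ∫ ξ, (1 - villatK r ((r : ℂ) * ξ / z)) ∂μ₂

namespace VillatProof

open Filter Topology Bornology Metric

/-- The general term of the Villat kernel series. -/
noncomputable def vterm (r : ℝ) (z : ℂ) (k : ℕ) : ℂ :=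
  (z ^ (k + 1) - (r : ℂ) ^ (2 * (k + 1)) * z⁻¹ ^ (k + 1)) / (1 - (r : ℂ) ^ (2 * (k + 1)))

/-- The "error" term: `vterm = z^(k+1) + eterm`. -/
noncomputable def eterm (r : ℝ) (z : ℂ) (k : ℕ) : ℂ :=
  ((r : ℂ) ^ (2 * (k + 1)) * z ^ (k + 1) - (r : ℂ) ^ (2 * (k + 1)) * z⁻¹ ^ (k + 1)) /
    (1 - (r : ℂ) ^ (2 * (k + 1)))

noncomputable def Efun (r : ℝ) (z : ℂ) : ℂ := ∑' k, eterm r z k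

lemma villatK_def (r : ℝ) (z : ℂ) : villatK r z = 1 + 2 * ∑' k, vterm r z k := rfl

variable {r : ℝ} {z : ℂ}

lemma rpow_le_rsq (hr0 : 0 ≤ r) (hr1 : r ≤ 1) (k : ℕ) : r ^ (2 * (k + 1)) ≤ r ^ 2 :=
  pow_le_pow_of_le_one hr0 hr1 (by omega)

lemma rsq_lt_one (hr0 : 0 ≤ r) (hr1 : r < 1) : r ^ 2 < 1 := by nlinarith

lemma norm_rpow (hr0 : 0 ≤ r) (n : ℕ) : ‖((r : ℂ)) ^ n‖ = r ^ n := by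
  rw [norm_pow, Complex.norm_real, Real.norm_eq_abs, _root_.abs_of_nonneg hr0]

lemma denom_norm_ge (hr0 : 0 ≤ r) (hr1 : r < 1) (k : ℕ) :
    1 - r ^ 2 ≤ ‖(1 : ℂ) - (r : ℂ) ^ (2 * (k + 1))‖ := by
  have h := norm_sub_norm_le (1 : ℂ) ((r : ℂ) ^ (2 * (k + 1)))
  rw [norm_one, norm_rpow hr0] at h
  linarith [rpow_le_rsq hr0 hr1.le k]

lemma denom_ne_zero (hr0 : 0 ≤ r) (hr1 : r < 1) (k : ℕ) :
    (1 : ℂ) - (r : ℂ) ^ (2 * (k + 1)) ≠ 0 := by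
  intro h
  have h2 := denom_norm_ge hr0 hr1 k
  rw [h, norm_zero] at h2
  nlinarith

lemma norm_eterm_le (hr0 : 0 < r) (hr1 : r < 1) (hz1 : r ≤ ‖z‖) (hz2 : ‖z‖ ≤ 1) (k : ℕ) :
    ‖eterm r z k‖ ≤ 2 * r ^ (k + 1) / (1 - r ^ 2) := by
  have hz0 : (0 : ℝ) < ‖z‖ := lt_of_lt_of_le hr0 hz1
  have hr2 : (0 : ℝ) < 1 - r ^ 2 := by nlinarith
  rw [eterm, norm_div]
  have e1 : ‖(r : ℂ) ^ (2 * (k + 1)) * z ^ (k + 1)‖ ≤ r ^ (k + 1) := by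
    rw [norm_mul, norm_rpow hr0.le, norm_pow]
    calc r ^ (2 * (k + 1)) * ‖z‖ ^ (k + 1)
        ≤ r ^ (2 * (k + 1)) * 1 ^ (k + 1) := by
          exact mul_le_mul_of_nonneg_left (pow_le_pow_left₀ (norm_nonneg z) hz2 _)
            (pow_nonneg hr0.le _)
      _ ≤ r ^ (k + 1) := by
          rw [one_pow, mul_one]
          exact pow_le_pow_of_le_one hr0.le hr1.le (by omega)
  have e2 : ‖(r : ℂ) ^ (2 * (k + 1)) * z⁻¹ ^ (k + 1)‖ ≤ r ^ (k + 1) := by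
    rw [norm_mul, norm_rpow hr0.le, norm_pow, norm_inv]
    have h1 : r * ‖z‖⁻¹ ≤ 1 := by
      rw [← div_eq_mul_inv]
      exact div_le_one_of_le₀ hz1 hz0.le
    calc r ^ (2 * (k + 1)) * ‖z‖⁻¹ ^ (k + 1)
        = r ^ (k + 1) * (r * ‖z‖⁻¹) ^ (k + 1) := by
          rw [mul_pow, ← mul_assoc, ← pow_add, two_mul]
      _ ≤ r ^ (k + 1) * 1 := by
          refine mul_le_mul_of_nonneg_left ?_ (by positivity)
          exact pow_le_one₀ (by positivity) h1
      _ = r ^ (k + 1) := mul_one _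
  have hnum : ‖(r : ℂ) ^ (2 * (k + 1)) * z ^ (k + 1) - (r : ℂ) ^ (2 * (k + 1)) * z⁻¹ ^ (k + 1)‖
      ≤ 2 * r ^ (k + 1) := by
    calc ‖(r : ℂ) ^ (2 * (k + 1)) * z ^ (k + 1) - (r : ℂ) ^ (2 * (k + 1)) * z⁻¹ ^ (k + 1)‖
        ≤ ‖(r : ℂ) ^ (2 * (k + 1)) * z ^ (k + 1)‖ + ‖(r : ℂ) ^ (2 * (k + 1)) * z⁻¹ ^ (k + 1)‖ :=
          norm_sub_le _ _
      _ ≤ 2 * r ^ (k + 1) := by linarith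
  exact div_le_div₀ (by positivity) hnum hr2 (denom_norm_ge hr0.le hr1 k)

lemma summable_pow_succ {a : ℝ} (h0 : 0 ≤ a) (h1 : a < 1) :
    Summable (fun k : ℕ => a ^ (k + 1)) :=
  ((summable_geometric_of_lt_one h0 h1).mul_left a).congr fun k => (pow_succ' a k).symm

lemma tsum_pow_succ {a : ℝ} (h0 : 0 ≤ a) (h1 : a < 1) :
    ∑' k : ℕ, a ^ (k + 1) = a / (1 - a) := by
  have h : ∑' k : ℕ, a ^ (k + 1) = ∑' k : ℕ, a * a ^ k := tsum_congr fun k => pow_succ' a k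
  rw [h, tsum_mul_left, tsum_geometric_of_lt_one h0 h1, div_eq_mul_inv]

lemma summable_pow_succ_c {w : ℂ} (h : ‖w‖ < 1) : Summable (fun k : ℕ => w ^ (k + 1)) :=
  ((summable_geometric_of_norm_lt_one h).mul_left w).congr fun k => (pow_succ' w k).symm

lemma summable_eterm (hr0 : 0 < r) (hr1 : r < 1) (hz1 : r ≤ ‖z‖) (hz2 : ‖z‖ ≤ 1) :
    Summable (eterm r z) := by
  have hs : Summable (fun k : ℕ => 2 * r ^ (k + 1) / (1 - r ^ 2)) :=
    ((summable_pow_succ hr0.le hr1).mul_left 2).div_const _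
  exact Summable.of_norm_bounded hs (norm_eterm_le hr0 hr1 hz1 hz2)

lemma vterm_eq (hr0 : 0 ≤ r) (hr1 : r < 1) (k : ℕ) (z : ℂ) :
    vterm r z k = z ^ (k + 1) + eterm r z k := by
  have h := denom_ne_zero hr0 hr1 k
  rw [vterm, eterm]
  field_simp
  ring

lemma summable_vterm (hr0 : 0 < r) (hr1 : r < 1) (hz1 : r ≤ ‖z‖) (hz2 : ‖z‖ < 1) :
    Summable (vterm r z) :=
  ((summable_pow_succ_c hz2).add (summable_eterm hr0 hr1 hz1 hz2.le)).congr
    fun k => (vterm_eq hr0.le hr1 k z).symm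

lemma villatK_eq (hr0 : 0 < r) (hr1 : r < 1) (hz1 : r ≤ ‖z‖) (hz2 : ‖z‖ < 1) :
    villatK r z = (1 + z) / (1 - z) + 2 * Efun r z := by
  have hz1' : z ≠ 1 := by
    intro h; rw [h, norm_one] at hz2; exact lt_irrefl _ hz2
  have hden : (1 : ℂ) - z ≠ 0 := sub_ne_zero.mpr (Ne.symm hz1')
  rw [villatK_def]
  have h1 : ∑' k, vterm r z k = (∑' k : ℕ, z ^ (k + 1)) + Efun r z := by
    rw [Efun, ← Summable.tsum_add (summable_pow_succ_c hz2) (summable_eterm hr0 hr1 hz1 hz2.le)]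
    exact tsum_congr fun k => vterm_eq hr0.le hr1 k z
  have h2 : ∑' k : ℕ, z ^ (k + 1) = z * (1 - z)⁻¹ := by
    have h : ∑' k : ℕ, z ^ (k + 1) = ∑' k : ℕ, z * z ^ k := tsum_congr fun k => pow_succ' z k
    rw [h, tsum_mul_left, tsum_geometric_of_norm_lt_one hz2]
  rw [h1, h2]
  field_simp
  ring

lemma ofReal_mul_re' (a : ℝ) (w : ℂ) : ((a : ℂ) * w).re = a * w.re := by
  simp [Complex.mul_re]

lemma vterm_re (r : ℝ) (z : ℂ) (k : ℕ) :
    (vterm r z k).re =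
      (1 - r ^ (2 * (k + 1)) / Complex.normSq z ^ (k + 1)) / (1 - r ^ (2 * (k + 1)))
        * (z ^ (k + 1)).re := by
  rw [vterm, inv_pow]
  rw [show ((r : ℂ)) ^ (2 * (k + 1)) = ((r ^ (2 * (k + 1)) : ℝ) : ℂ) by push_cast; ring]
  rw [show (1 : ℂ) - ((r ^ (2 * (k + 1)) : ℝ) : ℂ) = ((1 - r ^ (2 * (k + 1)) : ℝ) : ℂ) by
    push_cast; ring]
  rw [Complex.div_ofReal_re, Complex.sub_re, ofReal_mul_re', Complex.inv_re,
    map_pow Complex.normSq z (k + 1)]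
  ring

lemma eterm_re (r : ℝ) (z : ℂ) (k : ℕ) :
    (eterm r z k).re =
      r ^ (2 * (k + 1)) * (1 - (Complex.normSq z ^ (k + 1))⁻¹) / (1 - r ^ (2 * (k + 1)))
        * (z ^ (k + 1)).re := by
  rw [eterm, inv_pow]
  rw [show ((r : ℂ)) ^ (2 * (k + 1)) = ((r ^ (2 * (k + 1)) : ℝ) : ℂ) by push_cast; ring]
  rw [show (1 : ℂ) - ((r ^ (2 * (k + 1)) : ℝ) : ℂ) = ((1 - r ^ (2 * (k + 1)) : ℝ) : ℂ) by
    push_cast; ring]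
  rw [Complex.div_ofReal_re, Complex.sub_re, ofReal_mul_re', ofReal_mul_re', Complex.inv_re,
    map_pow Complex.normSq z (k + 1)]
  field_simp

lemma villatK_re (h : Summable (vterm r z)) :
    (villatK r z).re = 1 + 2 * ∑' k, (vterm r z k).re := by
  have h1 : (villatK r z).re = 1 + 2 * (∑' k, vterm r z k).re := by
    rw [villatK_def]; simp [Complex.mul_re]
  rw [h1, Complex.re_tsum h]

lemma normSq_eq_norm_sq (w : ℂ) : Complex.normSq w = ‖w‖ ^ 2 := by
  rw [Complex.normSq_eq_norm_sq]

lemma villatK_re_sphere_r (hr0 : 0 < r) (hr1 : r < 1) (hz : ‖z‖ = r) :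
    (villatK r z).re = 1 := by
  have hsum := summable_vterm hr0 hr1 (le_of_eq hz.symm) (by rw [hz]; exact hr1)
  rw [villatK_re hsum]
  have h0 : ∀ k, (vterm r z k).re = 0 := by
    intro k
    rw [vterm_re]
    have hNS : Complex.normSq z = r ^ 2 := by rw [normSq_eq_norm_sq, hz]
    rw [hNS, ← pow_mul, mul_comm (2 : ℕ) (k + 1), mul_comm (k + 1) 2,
      div_self (by positivity : (r : ℝ) ^ (2 * (k + 1)) ≠ 0)]
    simp
  simp [h0]

lemma Efun_re_sphere_one (hr0 : 0 < r) (hr1 : r < 1) (hz : ‖z‖ = 1) :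
    (Efun r z).re = 0 := by
  have hsum := summable_eterm hr0 hr1 (by rw [hz]; exact hr1.le) (le_of_eq hz)
  rw [Efun, Complex.re_tsum hsum]
  have h0 : ∀ k, (eterm r z k).re = 0 := by
    intro k
    rw [eterm_re]
    have hNS : Complex.normSq z = 1 := by rw [normSq_eq_norm_sq, hz]; norm_num
    rw [hNS]
    simp
  simp [h0]

lemma re_frac_nonneg {w : ℂ} (hw : ‖w‖ ≤ 1) : 0 ≤ ((1 + w) / (1 - w)).re := by
  rw [Complex.div_re, ← add_div]
  apply div_nonneg _ (Complex.normSq_nonneg _)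
  have h1 : Complex.normSq w ≤ 1 := by
    rw [normSq_eq_norm_sq]; nlinarith [norm_nonneg w]
  have h2 : Complex.normSq w = w.re * w.re + w.im * w.im := Complex.normSq_apply w
  simp only [Complex.add_re, Complex.add_im, Complex.sub_re, Complex.sub_im, Complex.one_re,
    Complex.one_im]
  nlinarith

/-- The open annulus `r < |w| < 1`. -/
def annU (r : ℝ) : Set ℂ := Metric.ball (0 : ℂ) 1 ∩ (Metric.closedBall (0 : ℂ) r)ᶜ

lemma mem_annU {w : ℂ} : w ∈ annU r ↔ r < ‖w‖ ∧ ‖w‖ < 1 := by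
  simp [annU, Metric.mem_ball, Metric.mem_closedBall, dist_zero_right, not_le, and_comm]

lemma isOpen_annU : IsOpen (annU r) :=
  Metric.isOpen_ball.inter (isOpen_compl_iff.mpr Metric.isClosed_closedBall)

lemma frontier_annU (hr0 : 0 < r) {w : ℂ} (hw : w ∈ frontier (annU r)) :
    ‖w‖ = r ∨ ‖w‖ = 1 := by
  have h := frontier_inter_subset (Metric.ball (0 : ℂ) 1) ((Metric.closedBall (0 : ℂ) r)ᶜ) hw
  rw [frontier_compl, frontier_ball (0 : ℂ) one_ne_zero,
    frontier_closedBall (0 : ℂ) (ne_of_gt hr0)] at h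
  rcases h with h | h
  · right
    simpa [mem_sphere_zero_iff_norm] using h.1
  · left
    simpa [mem_sphere_zero_iff_norm] using h.2

lemma closure_annU_subset (hr0 : 0 < r) :
    closure (annU r) ⊆ {w : ℂ | r ≤ ‖w‖ ∧ ‖w‖ ≤ 1} := by
  intro w hw
  have h1 := closure_inter_subset_inter_closure (Metric.ball (0 : ℂ) 1)
    ((Metric.closedBall (0 : ℂ) r)ᶜ) hw
  constructor
  · have hsub : closure ((Metric.closedBall (0 : ℂ) r)ᶜ) ⊆ (Metric.ball (0 : ℂ) r)ᶜ :=
      closure_minimal (compl_subset_compl.mpr Metric.ball_subset_closedBall)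
        Metric.isOpen_ball.isClosed_compl
    have h2 := hsub h1.2
    simpa [Metric.mem_ball, dist_zero_right, not_lt] using h2
  · have h2 := h1.1
    rw [closure_ball (0 : ℂ) one_ne_zero] at h2
    simpa [Metric.mem_closedBall, dist_zero_right] using h2

lemma isCompact_annC (r : ℝ) : IsCompact {w : ℂ | r ≤ ‖w‖ ∧ ‖w‖ ≤ 1} := by
  have h : {w : ℂ | r ≤ ‖w‖ ∧ ‖w‖ ≤ 1}
      = Metric.closedBall (0 : ℂ) 1 ∩ (Metric.ball (0 : ℂ) r)ᶜ := by
    ext w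
    simp [Metric.mem_closedBall, Metric.mem_ball, dist_zero_right, not_lt, and_comm]
  rw [h]
  exact (isCompact_closedBall _ _).inter_right Metric.isOpen_ball.isClosed_compl

lemma continuousOn_Efun (hr0 : 0 < r) (hr1 : r < 1) :
    ContinuousOn (Efun r) {w : ℂ | r ≤ ‖w‖ ∧ ‖w‖ ≤ 1} := by
  apply continuousOn_tsum (u := fun k => 2 * r ^ (k + 1) / (1 - r ^ 2))
  · intro k
    apply ContinuousOn.div_const
    apply ContinuousOn.sub
    · exact continuousOn_const.mul ((continuous_pow (k + 1)).continuousOn)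
    · apply continuousOn_const.mul
      apply ContinuousOn.pow
      apply ContinuousOn.inv₀ continuousOn_id
      intro x hx h0
      rw [id_eq] at h0
      rw [h0] at hx
      simp only [Set.mem_setOf_eq, norm_zero] at hx
      linarith [hx.1]
  · exact ((summable_pow_succ hr0.le hr1).mul_left 2).div_const _
  · intro k x hx
    exact norm_eterm_le hr0 hr1 hx.1 hx.2 k

lemma differentiableOn_Efun (hr0 : 0 < r) (hr1 : r < 1) :
    DifferentiableOn ℂ (Efun r) (annU r) := by
  apply differentiableOn_tsum_of_summable_norm
    (u := fun k => 2 * r ^ (k + 1) / (1 - r ^ 2))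
    (((summable_pow_succ hr0.le hr1).mul_left 2).div_const _)
  · intro k
    apply DifferentiableOn.div_const
    apply DifferentiableOn.sub
    · exact (differentiableOn_const _).mul ((differentiable_pow (k + 1)).differentiableOn)
    · apply (differentiableOn_const _).mul
      apply DifferentiableOn.pow
      apply DifferentiableOn.inv differentiableOn_id
      intro x hx h0
      rw [mem_annU] at hx
      rw [h0] at hx
      rw [norm_zero] at hx
      linarith [hx.1]
  · exact isOpen_annU
  · intro k w hw
    rw [mem_annU] at hw
    exact norm_eterm_le hr0 hr1 hw.1.le hw.2.le k

lemma continuousOn_villatK (hr0 : 0 < r) (hr1 : r < 1) :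
    ContinuousOn (villatK r) (annU r) := by
  refine ContinuousOn.congr (f := fun w => (1 + w) / (1 - w) + 2 * Efun r w) ?_ ?_
  · apply ContinuousOn.add
    · apply ContinuousOn.div (continuous_const.add continuous_id).continuousOn
        (continuous_const.sub continuous_id).continuousOn
      intro w hw
      rw [mem_annU] at hw
      refine sub_ne_zero.mpr fun h => ?_
      rw [id_eq] at h
      rw [← h, norm_one] at hw
      exact lt_irrefl _ hw.2
    · exact continuousOn_const.mul
        ((continuousOn_Efun hr0 hr1).mono (fun w hw => by
          rw [mem_annU] at hw; exact ⟨hw.1.le, hw.2.le⟩))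
  · intro w hw
    rw [mem_annU] at hw
    exact villatK_eq hr0 hr1 hw.1.le hw.2

lemma re_villatK_nonneg (hr0 : 0 < r) (hr1 : r < 1) (h1 : r < ‖z‖) (h2 : ‖z‖ < 1) :
    0 ≤ (villatK r z).re := by
  obtain ⟨M, hM⟩ := (isCompact_annC r).exists_bound_of_continuousOn (continuousOn_Efun hr0 hr1)
  have hz1' : z ≠ 1 := by intro h; rw [h, norm_one] at h2; exact lt_irrefl _ h2
  have hc0 : 0 < ‖(1 : ℂ) - z‖ / 2 := by
    have : (1 : ℂ) - z ≠ 0 := sub_ne_zero.mpr (Ne.symm hz1')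
    have := norm_pos_iff.mpr this
    linarith
  have key : ∀ n : ℕ, ‖(1 : ℂ) - z‖ / 2 * Real.exp (-(((n : ℝ) + 1) * (villatK r z).re)) ≤ 1 := by
    intro n
    set G : ℂ → ℂ := fun w =>
      (1 - w) / 2 * Complex.exp (-((n : ℂ) + 1) * ((1 + w) / (1 - w) + 2 * Efun r w)) with hG
    have hnorm : ∀ w : ℂ, ‖G w‖ =
        ‖(1 : ℂ) - w‖ / 2
          * Real.exp (-(((n : ℝ) + 1) * (((1 + w) / (1 - w)).re + 2 * (Efun r w).re))) := by
      intro w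
      rw [hG]
      simp only [norm_mul, norm_div, Complex.norm_exp]
      congr 1
      · simp
      · congr 1
        simp [Complex.mul_re, Complex.add_re, Complex.add_im, Complex.neg_re, Complex.neg_im]
        ring
    have hbound : ∀ w ∈ frontier (annU r), ‖G w‖ ≤ 1 := by
      intro w hw
      rcases frontier_annU hr0 hw with hwr | hw1
      · -- inner circle : Re K = 1
        have hre : ((1 + w) / (1 - w)).re + 2 * (Efun r w).re = 1 := by
          have hid := villatK_eq hr0 hr1 (le_of_eq hwr.symm) (by rw [hwr]; exact hr1)
          have hv := villatK_re_sphere_r hr0 hr1 hwr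
          rw [hid] at hv
          simpa [Complex.add_re, Complex.mul_re] using hv
        rw [hnorm w, hre, mul_one]
        have hw2 : ‖(1 : ℂ) - w‖ / 2 ≤ 1 := by
          have : ‖(1 : ℂ) - w‖ ≤ 1 + r := by
            calc ‖(1 : ℂ) - w‖ ≤ ‖(1 : ℂ)‖ + ‖w‖ := norm_sub_le _ _
              _ = 1 + r := by rw [norm_one, hwr]
          linarith
        have hexp : Real.exp (-((n : ℝ) + 1)) ≤ 1 := by
          apply Real.exp_le_one_iff.mpr
          have : (0 : ℝ) ≤ (n : ℝ) := Nat.cast_nonneg n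
          linarith
        calc ‖(1 : ℂ) - w‖ / 2 * Real.exp (-((n : ℝ) + 1))
            ≤ 1 * 1 := mul_le_mul hw2 hexp (Real.exp_nonneg _) one_pos.le
          _ = 1 := mul_one 1
      · -- outer circle : Re K ≥ 0
        rw [hnorm w, Efun_re_sphere_one hr0 hr1 hw1]
        have hfr := re_frac_nonneg (le_of_eq hw1)
        have hw2 : ‖(1 : ℂ) - w‖ / 2 ≤ 1 := by
          have : ‖(1 : ℂ) - w‖ ≤ 1 + 1 := by
            calc ‖(1 : ℂ) - w‖ ≤ ‖(1 : ℂ)‖ + ‖w‖ := norm_sub_le _ _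
              _ = 1 + 1 := by rw [norm_one, hw1]
          linarith
        have hexp : Real.exp (-(((n : ℝ) + 1) * (((1 + w) / (1 - w)).re + 2 * 0))) ≤ 1 := by
          apply Real.exp_le_one_iff.mpr
          have h0 : (0 : ℝ) ≤ (n : ℝ) := Nat.cast_nonneg n
          nlinarith
        calc ‖(1 : ℂ) - w‖ / 2 * Real.exp (-(((n : ℝ) + 1) * (((1 + w) / (1 - w)).re + 2 * 0)))
            ≤ 1 * 1 := mul_le_mul hw2 hexp (Real.exp_nonneg _) one_pos.le
          _ = 1 := mul_one 1
    have hdc : DiffContOnCl ℂ G (annU r) := by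
      constructor
      · -- differentiability
        apply DifferentiableOn.mul
        · exact ((differentiableOn_const _).sub differentiableOn_id).div_const _
        · apply DifferentiableOn.cexp
          apply DifferentiableOn.mul (differentiableOn_const _)
          apply DifferentiableOn.add
          · apply DifferentiableOn.div ((differentiableOn_const _).add differentiableOn_id)
              ((differentiableOn_const _).sub differentiableOn_id)
            intro x hx
            rw [mem_annU] at hx
            refine sub_ne_zero.mpr fun h => ?_
            rw [← h, norm_one] at hx
            exact lt_irrefl _ hx.2
          · exact (differentiableOn_const _).mul (differentiableOn_Efun hr0 hr1)
      · -- continuity on the closure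
        apply ContinuousOn.mono ?_ (closure_annU_subset hr0)
        intro w hw
        by_cases hw1 : w = 1
        · subst hw1
          have hG1 : G 1 = 0 := by simp [hG]
          rw [ContinuousWithinAt, hG1]
          apply squeeze_zero_norm'
            (a := fun x : ℂ => ‖(1 : ℂ) - x‖ / 2 * Real.exp (((n : ℝ) + 1) * (2 * M)))
          · filter_upwards [self_mem_nhdsWithin] with x hx
            rw [hnorm x]
            apply mul_le_mul_of_nonneg_left _ (by positivity)
            apply Real.exp_le_exp.mpr
            have hfr := re_frac_nonneg hx.2
            have hE : |(Efun r x).re| ≤ M := by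
              have h1 : |(Efun r x).re| ≤ ‖Efun r x‖ := by
                exact Complex.abs_re_le_norm _
              exact h1.trans (hM x hx)
            have h0 : (0 : ℝ) ≤ (n : ℝ) := Nat.cast_nonneg n
            have habs := abs_le.mp hE
            nlinarith
          · have hcont : Continuous fun x : ℂ =>
                ‖(1 : ℂ) - x‖ / 2 * Real.exp (((n : ℝ) + 1) * (2 * M)) := by
              continuity
            have := hcont.tendsto 1
            simp only [sub_self, norm_zero, zero_div, zero_mul] at this
            exact this.mono_left nhdsWithin_le_nhds
        · -- w ≠ 1 : plain continuity
          apply ContinuousWithinAt.mul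
          · exact ((continuous_const.sub continuous_id).div_const _).continuousWithinAt
          · apply ContinuousWithinAt.cexp
            apply ContinuousWithinAt.mul continuousWithinAt_const
            apply ContinuousWithinAt.add
            · apply ContinuousWithinAt.div
                (continuous_const.add continuous_id).continuousWithinAt
                (continuous_const.sub continuous_id).continuousWithinAt
              exact sub_ne_zero.mpr (Ne.symm hw1)
            · exact continuousWithinAt_const.mul ((continuousOn_Efun hr0 hr1) w hw)
    have hbd : IsBounded (annU r) :=
      Metric.isBounded_ball.subset inter_subset_left
    have hzU : z ∈ annU r := mem_annU.mpr ⟨h1, h2⟩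
    have hmax := Complex.norm_le_of_forall_mem_frontier_norm_le hbd hdc hbound
      (subset_closure hzU)
    rw [hnorm z] at hmax
    have hid : ((1 + z) / (1 - z)).re + 2 * (Efun r z).re = (villatK r z).re := by
      rw [villatK_eq hr0 hr1 h1.le h2]
      simp [Complex.add_re, Complex.mul_re]
    rwa [hid] at hmax
  -- pass to the limit n → ∞
  have hineq : ∀ n : ℕ, Real.log (‖(1 : ℂ) - z‖ / 2) / ((n : ℝ) + 1) ≤ (villatK r z).re := by
    intro n
    have h := key n
    have hexp : Real.exp (-(((n : ℝ) + 1) * (villatK r z).re)) ≤ 1 / (‖(1 : ℂ) - z‖ / 2) := by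
      rw [le_div_iff₀ hc0]
      linarith [mul_comm (Real.exp (-(((n : ℝ) + 1) * (villatK r z).re))) (‖(1 : ℂ) - z‖ / 2)]
    have hlog := Real.log_le_log (Real.exp_pos _) hexp
    rw [Real.log_exp, one_div, Real.log_inv] at hlog
    have hn : (0 : ℝ) < (n : ℝ) + 1 := by positivity
    rw [div_le_iff₀ hn]
    nlinarith
  have hten : Tendsto (fun n : ℕ => Real.log (‖(1 : ℂ) - z‖ / 2) / ((n : ℝ) + 1)) atTop (𝓝 0) := by
    have h := tendsto_one_div_add_atTop_nhds_zero_nat.const_mul (Real.log (‖(1 : ℂ) - z‖ / 2))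
    rw [mul_zero] at h
    refine h.congr fun n => ?_
    rw [mul_one_div]
  exact le_of_tendsto' hten hineq

lemma re_villatK_le (hr0 : 0 < r) (hr1 : r < 1) {w : ℂ} (h1 : r < ‖w‖) (h2 : ‖w‖ < 1) :
    (villatK r w).re ≤ (villatK r ((‖w‖ : ℝ) : ℂ)).re := by
  have hnorm : ‖((‖w‖ : ℝ) : ℂ)‖ = ‖w‖ := by
    rw [Complex.norm_real, Real.norm_eq_abs, _root_.abs_of_nonneg (norm_nonneg _)]
  have hs1 := summable_vterm hr0 hr1 h1.le h2
  have hs2 := summable_vterm hr0 hr1 (by rw [hnorm]; exact h1.le) (by rw [hnorm]; exact h2)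
  rw [villatK_re hs1, villatK_re hs2]
  have hterm : ∀ k, (vterm r w k).re ≤ (vterm r ((‖w‖ : ℝ) : ℂ) k).re := by
    intro k
    rw [vterm_re, vterm_re]
    have hNS : Complex.normSq ((‖w‖ : ℝ) : ℂ) = Complex.normSq w := by
      rw [Complex.normSq_ofReal, normSq_eq_norm_sq]; ring
    rw [hNS]
    have hRe : ((((‖w‖ : ℝ)) : ℂ) ^ (k + 1)).re = ‖w‖ ^ (k + 1) := by
      rw [← Complex.ofReal_pow, Complex.ofReal_re]
    rw [hRe]
    have hcoef : 0 ≤ (1 - r ^ (2 * (k + 1)) / Complex.normSq w ^ (k + 1))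
        / (1 - r ^ (2 * (k + 1))) := by
      have hw0 : (0 : ℝ) < ‖w‖ := lt_trans hr0 h1
      have hpos : 0 < Complex.normSq w ^ (k + 1) := by
        apply pow_pos
        rw [normSq_eq_norm_sq]
        positivity
      have hq : r ^ (2 * (k + 1)) ≤ Complex.normSq w ^ (k + 1) := by
        rw [pow_mul]
        apply pow_le_pow_left₀ (by positivity)
        rw [normSq_eq_norm_sq]
        nlinarith
      have hle1 : r ^ (2 * (k + 1)) / Complex.normSq w ^ (k + 1) ≤ 1 :=
        (div_le_one hpos).mpr hq
      have hden : 0 < 1 - r ^ (2 * (k + 1)) := by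
        have := rpow_le_rsq hr0.le hr1.le k
        nlinarith
      apply div_nonneg (by linarith) hden.le
    apply mul_le_mul_of_nonneg_left _ hcoef
    calc (w ^ (k + 1)).re ≤ ‖w ^ (k + 1)‖ := Complex.re_le_norm _
      _ = ‖w‖ ^ (k + 1) := by rw [norm_pow]
  have hsum := Summable.tsum_le_tsum hterm (Complex.hasSum_re hs1.hasSum).summable
    (Complex.hasSum_re hs2.hasSum).summable
  linarith

set_option maxHeartbeats 1000000 in
lemma villatK_real_bound (hr0 : 0 < r) (hr1 : r < 1) {ρ : ℝ} (h1 : r < ρ) (h2 : ρ < 1) :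
    (villatK r ((r / ρ : ℝ) : ℂ)).re ≤ 1 + 4 * r * (1 - ρ) / ((ρ - r) * (1 - r) ^ 2) := by
  have hρ0 : 0 < ρ := hr0.trans h1
  have hρne : ρ ≠ 0 := ne_of_gt hρ0
  have hrne : r ≠ 0 := ne_of_gt hr0
  set s : ℝ := r / ρ with hs
  have hs0 : 0 < s := div_pos hr0 hρ0
  have hsr : r < s := by rw [hs, lt_div_iff₀ hρ0]; nlinarith
  have hs1 : s < 1 := by rw [hs, div_lt_one hρ0]; exact h1
  have hnorm : ‖((s : ℝ) : ℂ)‖ = s := by rw [Complex.norm_real, Real.norm_eq_abs, _root_.abs_of_nonneg hs0.le]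
  have hsum := summable_vterm hr0 hr1 (by rw [hnorm]; exact hsr.le) (by rw [hnorm]; exact hs1)
  rw [villatK_re hsum]
  have hterm : ∀ k, (vterm r ((s : ℝ) : ℂ) k).re
      = (1 - ρ ^ (2 * (k + 1))) / (1 - r ^ (2 * (k + 1))) * s ^ (k + 1) := by
    intro k
    rw [vterm_re, Complex.normSq_ofReal, ← Complex.ofReal_pow, Complex.ofReal_re]
    have hne : (s * s) ^ (k + 1) ≠ 0 := by positivity
    have hdiv : r ^ (2 * (k + 1)) / (s * s) ^ (k + 1) = ρ ^ (2 * (k + 1)) := by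
      rw [div_eq_iff hne, hs]
      rw [pow_mul, pow_mul]
      rw [show (r / ρ * (r / ρ)) = (r / ρ) ^ 2 by ring]
      rw [← mul_pow, ← mul_pow]
      congr 1
      field_simp
    rw [hdiv]
  have hub : ∀ k, (vterm r ((s : ℝ) : ℂ) k).re
      ≤ ((r / ρ) ^ (k + 1) - (r * ρ) ^ (k + 1)) / (1 - r ^ 2) := by
    intro k
    rw [hterm k]
    have e1 : (r / ρ) ^ (k + 1) - (r * ρ) ^ (k + 1) = (1 - ρ ^ (2 * (k + 1))) * s ^ (k + 1) := by
      rw [hs, pow_mul]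
      rw [show (ρ : ℝ) ^ 2 = ρ * ρ by ring]
      rw [div_pow, mul_pow, mul_pow]
      field_simp
    rw [e1]
    have hρpow : ρ ^ (2 * (k + 1)) ≤ 1 := pow_le_one₀ hρ0.le h2.le
    have hnum : 0 ≤ (1 - ρ ^ (2 * (k + 1))) * s ^ (k + 1) := by
      apply mul_nonneg (by linarith) (by positivity)
    have hden1 : 0 < 1 - r ^ 2 := by nlinarith
    have hden2 : 1 - r ^ 2 ≤ 1 - r ^ (2 * (k + 1)) := by
      linarith [rpow_le_rsq hr0.le hr1.le k]
    rw [div_mul_eq_mul_div]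
    exact div_le_div_of_nonneg_left hnum hden1 hden2
  have hubsum : Summable (fun k : ℕ => ((r / ρ) ^ (k + 1) - (r * ρ) ^ (k + 1)) / (1 - r ^ 2)) := by
    apply Summable.div_const
    exact (summable_pow_succ (by positivity) (by rw [div_lt_one hρ0]; exact h1)).sub
      (summable_pow_succ (by positivity) (by nlinarith))
  have htsum : Summable (fun k => (vterm r ((s : ℝ) : ℂ) k).re) :=
    (Complex.hasSum_re hsum.hasSum).summable
  have hle := Summable.tsum_le_tsum hub htsum hubsum
  have hval : ∑' k : ℕ, ((r / ρ) ^ (k + 1) - (r * ρ) ^ (k + 1)) / (1 - r ^ 2)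
      = ((r / ρ) / (1 - r / ρ) - (r * ρ) / (1 - r * ρ)) / (1 - r ^ 2) := by
    rw [tsum_div_const]
    congr 1
    rw [Summable.tsum_sub (summable_pow_succ (by positivity) (by rw [div_lt_one hρ0]; exact h1))
      (summable_pow_succ (by positivity) (by nlinarith))]
    rw [tsum_pow_succ (by positivity) (by rw [div_lt_one hρ0]; exact h1),
      tsum_pow_succ (by positivity) (by nlinarith)]
  rw [hval] at hle
  -- now the purely real estimate
  have hA : 0 < ρ - r := by linarith
  have hB : 0 < 1 - r * ρ := by nlinarith
  have hC : 0 < 1 - r ^ 2 := by nlinarith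
  have hD : 0 < (1 - r) ^ 2 := by nlinarith
  have e2 : (r / ρ) / (1 - r / ρ) = r / (ρ - r) := by
    have hx1 : (0 : ℝ) < 1 - r / ρ := by
      have h := hs1
      rw [hs] at h
      linarith
    rw [div_eq_div_iff (ne_of_gt hx1) (ne_of_gt hA)]
    field_simp
    try ring
  have e3 : r / (ρ - r) - (r * ρ) / (1 - r * ρ) = r * (1 - ρ ^ 2) / ((ρ - r) * (1 - r * ρ)) := by
    rw [div_sub_div _ _ (ne_of_gt hA) (ne_of_gt hB), div_eq_div_iff (by positivity) (by positivity)]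
    ring
  rw [e2, e3] at hle
  have hfinal : r * (1 - ρ ^ 2) / ((ρ - r) * (1 - r * ρ)) / (1 - r ^ 2)
      ≤ 2 * r * (1 - ρ) / ((ρ - r) * (1 - r) ^ 2) := by
    rw [div_div, div_le_div_iff₀ (by positivity) (by positivity)]
    have k1 : (1 - r) ≤ (1 - r * ρ) := by nlinarith
    have k2 : (1 - r) ≤ (1 - r ^ 2) := by nlinarith
    have k3 : (1 - r) ^ 2 ≤ (1 - r * ρ) * (1 - r ^ 2) := by
      nlinarith [mul_le_mul k1 k2 (by linarith : (0 : ℝ) ≤ 1 - r)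
        (by linarith : (0 : ℝ) ≤ 1 - r * ρ)]
    have k6 : (1 + ρ) * (1 - r) ^ 2 ≤ 2 * ((1 - r * ρ) * (1 - r ^ 2)) := by
      nlinarith [k3, mul_nonneg (by linarith : (0 : ℝ) ≤ 1 - ρ) (sq_nonneg (1 - r))]
    have key : (1 - ρ ^ 2) * (1 - r) ^ 2 ≤ 2 * (1 - ρ) * ((1 - r * ρ) * (1 - r ^ 2)) := by
      nlinarith [mul_le_mul_of_nonneg_left k6 (by linarith : (0 : ℝ) ≤ 1 - ρ)]
    nlinarith [mul_le_mul_of_nonneg_left key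
      (by positivity : (0 : ℝ) ≤ r * (ρ - r))]
  have h2sum : ∑' k, (vterm r ((s : ℝ) : ℂ) k).re
      ≤ 2 * r * (1 - ρ) / ((ρ - r) * (1 - r) ^ 2) := le_trans hle hfinal
  have : 2 * (2 * r * (1 - ρ) / ((ρ - r) * (1 - r) ^ 2))
      = 4 * r * (1 - ρ) / ((ρ - r) * (1 - r) ^ 2) := by ring
  linarith

lemma integrable_aux (μ : Measure ℂ) [IsFiniteMeasure μ]
    (hnull : μ {ξ : ℂ | ‖ξ‖ ≠ 1} = 0) {g : ℂ → ℂ} {W : Set ℂ} (hW : IsOpen W)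
    (hsub : ∀ ξ : ℂ, ‖ξ‖ = 1 → ξ ∈ W) (hg : ContinuousOn g W) :
    Integrable g μ := by
  have hae : ∀ᵐ ξ ∂μ, ‖ξ‖ = 1 := by
    rw [ae_iff]
    exact hnull
  have haeW : ∀ᵐ ξ ∂μ, ξ ∈ W := hae.mono fun ξ h => hsub ξ h
  have hmeas : AEStronglyMeasurable g μ := by
    have h : AEStronglyMeasurable g (μ.restrict W) :=
      hg.aestronglyMeasurable hW.measurableSet
    rwa [Measure.restrict_eq_self_of_ae_mem haeW] at h
  obtain ⟨C, hC⟩ := (isCompact_sphere (0 : ℂ) 1).exists_bound_of_continuousOn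
    (hg.mono fun ξ hξ => hsub ξ (mem_sphere_zero_iff_norm.mp hξ))
  apply Integrable.mono' (integrable_const C) hmeas
  exact hae.mono fun ξ h => hC ξ (mem_sphere_zero_iff_norm.mpr h)

end VillatProof

open VillatProof in
/-- Lower bound for the real part of a function of the class `𝒱_r`:
`−Re p(z) ≤ (K_r(r/|z|) − 1) μ₂(𝕋) ≤ 4r(1−|z|) μ₂(𝕋)/((|z|−r)(1−r)²)`. -/
theorem villat_class_re_lower_bound
    (r : ℝ) (hr : r ∈ Ioo (0:ℝ) 1) (μ₁ μ₂ : Measure ℂ) (p : ℂ → ℂ)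
    (hp : IsVillatRep r μ₁ μ₂ p)
    (z : ℂ) (hz₁ : r < ‖z‖) (hz₂ : ‖z‖ < 1) :
    -(p z).re ≤ ((villatK r ((r / ‖z‖ : ℝ) : ℂ)).re - 1) * (μ₂ Set.univ).toReal ∧
    ((villatK r ((r / ‖z‖ : ℝ) : ℂ)).re - 1) * (μ₂ Set.univ).toReal ≤
      4 * r * (1 - ‖z‖) * (μ₂ Set.univ).toReal / ((‖z‖ - r) * (1 - r) ^ 2) := by
  obtain ⟨hr0, hr1⟩ := hr
  obtain ⟨fin1, fin2, hc1, hc2, hmass, hrepr⟩ := hp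
  haveI := fin1
  haveI := fin2
  have hρ0 : 0 < ‖z‖ := hr0.trans hz₁
  have hz0 : z ≠ 0 := by
    intro h
    rw [h, norm_zero] at hρ0
    exact lt_irrefl _ hρ0
  have hae₁ : ∀ᵐ ξ ∂μ₁, ‖ξ‖ = 1 := by rw [ae_iff]; exact hc1
  have hae₂ : ∀ᵐ ξ ∂μ₂, ‖ξ‖ = 1 := by rw [ae_iff]; exact hc2
  have hsρ1 : r / ‖z‖ < 1 := (div_lt_one hρ0).mpr hz₁
  have hsρr : r < r / ‖z‖ := by rw [lt_div_iff₀ hρ0]; nlinarith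
  -- the window around the circle
  set W : Set ℂ := {ξ : ℂ | ‖z‖ < ‖ξ‖} ∩ {ξ : ℂ | ‖ξ‖ < ‖z‖ / r} with hW
  have hWopen : IsOpen W :=
    (isOpen_lt continuous_const continuous_norm).inter
      (isOpen_lt continuous_norm continuous_const)
  have hWsub : ∀ ξ : ℂ, ‖ξ‖ = 1 → ξ ∈ W := by
    intro ξ hξ
    constructor
    · simp only [mem_setOf_eq, hξ]
      exact hz₂
    · simp only [mem_setOf_eq, hξ]
      rw [lt_div_iff₀ hr0]
      nlinarith
  have hWne : ∀ ξ ∈ W, ξ ≠ 0 := by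
    intro ξ hξ h0
    have h1 : ‖z‖ < ‖ξ‖ := hξ.1
    rw [h0, norm_zero] at h1
    linarith
  -- integrability of both integrands
  have hint₁ : Integrable (fun ξ => villatK r (z / ξ)) μ₁ := by
    apply integrable_aux μ₁ hc1 hWopen hWsub
    apply (continuousOn_villatK hr0 hr1).comp
      (ContinuousOn.div continuousOn_const continuousOn_id hWne)
    intro ξ hξ
    have hξ0 : (0 : ℝ) < ‖ξ‖ := hρ0.trans hξ.1
    rw [mem_annU]
    simp only [Pi.div_apply, Pi.mul_apply, id_eq]
    rw [norm_div]
    constructor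
    · rw [lt_div_iff₀ hξ0]
      have hb : ‖ξ‖ < ‖z‖ / r := hξ.2
      rw [lt_div_iff₀ hr0] at hb
      nlinarith
    · rw [div_lt_one hξ0]
      exact hξ.1
  have hint₂ : Integrable (fun ξ => villatK r ((r : ℂ) * ξ / z)) μ₂ := by
    apply integrable_aux μ₂ hc2 hWopen hWsub
    apply (continuousOn_villatK hr0 hr1).comp
      (((continuousOn_const.mul continuousOn_id).div continuousOn_const) fun ξ _ => hz0)
    intro ξ hξ
    have hξ0 : (0 : ℝ) < ‖ξ‖ := hρ0.trans hξ.1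
    have hnw : ‖(r : ℂ) * ξ / z‖ = r * ‖ξ‖ / ‖z‖ := by
      rw [norm_div, norm_mul, Complex.norm_real, Real.norm_eq_abs, _root_.abs_of_nonneg hr0.le]
    rw [mem_annU]
    simp only [Pi.div_apply, Pi.mul_apply, id_eq]
    rw [hnw]
    constructor
    · rw [lt_div_iff₀ hρ0]
      have ha : ‖z‖ < ‖ξ‖ := hξ.1
      nlinarith
    · rw [div_lt_one hρ0]
      have hb : ‖ξ‖ < ‖z‖ / r := hξ.2
      rw [lt_div_iff₀ hr0, mul_comm] at hb
      exact hb
  have hint₂' : Integrable (fun ξ => (1 : ℂ) - villatK r ((r : ℂ) * ξ / z)) μ₂ :=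
    (integrable_const 1).sub hint₂
  -- the real parts
  have hre : (p z).re = (∫ ξ, (villatK r (z / ξ)).re ∂μ₁)
      + ∫ ξ, (1 - (villatK r ((r : ℂ) * ξ / z)).re) ∂μ₂ := by
    rw [hrepr z hz₁ hz₂, Complex.add_re]
    have h1 : (∫ ξ, villatK r (z / ξ) ∂μ₁).re = ∫ ξ, (villatK r (z / ξ)).re ∂μ₁ :=
      (Complex.reCLM.integral_comp_comm hint₁).symm
    have h2 : (∫ ξ, (1 - villatK r ((r : ℂ) * ξ / z)) ∂μ₂).re
        = ∫ ξ, (1 - (villatK r ((r : ℂ) * ξ / z)).re) ∂μ₂ := by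
      have h3 : (∫ ξ, ((1 : ℂ) - villatK r ((r : ℂ) * ξ / z)) ∂μ₂).re
          = ∫ ξ, ((1 : ℂ) - villatK r ((r : ℂ) * ξ / z)).re ∂μ₂ :=
        (Complex.reCLM.integral_comp_comm hint₂').symm
      rw [h3]
      apply integral_congr_ae
      filter_upwards with ξ
      simp
    rw [h1, h2]
  have hpos : 0 ≤ ∫ ξ, (villatK r (z / ξ)).re ∂μ₁ := by
    apply integral_nonneg_of_ae
    filter_upwards [hae₁] with ξ hξ
    have hξ0 : ξ ≠ 0 := by
      intro h
      rw [h, norm_zero] at hξ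
      norm_num at hξ
    apply re_villatK_nonneg hr0 hr1
    · rw [norm_div, hξ, div_one]; exact hz₁
    · rw [norm_div, hξ, div_one]; exact hz₂
  have hcmp : ∀ᵐ ξ ∂μ₂,
      (1 : ℝ) - (villatK r ((r / ‖z‖ : ℝ) : ℂ)).re
        ≤ 1 - (villatK r ((r : ℂ) * ξ / z)).re := by
    filter_upwards [hae₂] with ξ hξ
    have hnw : ‖(r : ℂ) * ξ / z‖ = r / ‖z‖ := by
      rw [norm_div, norm_mul, Complex.norm_real, Real.norm_eq_abs, _root_.abs_of_nonneg hr0.le, hξ, mul_one]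
    have h := re_villatK_le hr0 hr1 (w := (r : ℂ) * ξ / z)
      (by rw [hnw]; exact hsρr) (by rw [hnw]; exact hsρ1)
    rw [hnw] at h
    linarith
  have hint₂re : Integrable (fun ξ => (1 : ℝ) - (villatK r ((r : ℂ) * ξ / z)).re) μ₂ := by
    have h := hint₂'.re
    refine h.congr ?_
    filter_upwards with ξ
    simp
  have hBle : ((1 : ℝ) - (villatK r ((r / ‖z‖ : ℝ) : ℂ)).re) * (μ₂ Set.univ).toReal
      ≤ ∫ ξ, (1 - (villatK r ((r : ℂ) * ξ / z)).re) ∂μ₂ := by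
    have h := integral_mono_ae (integrable_const _) hint₂re hcmp
    rwa [integral_const, smul_eq_mul, mul_comm] at h
  constructor
  · -- part 1
    rw [hre]
    have hring : ((villatK r ((r / ‖z‖ : ℝ) : ℂ)).re - 1) * (μ₂ Set.univ).toReal
        = -(((1 : ℝ) - (villatK r ((r / ‖z‖ : ℝ) : ℂ)).re) * (μ₂ Set.univ).toReal) := by ring
    rw [hring]
    linarith
  · -- part 2
    have hKb := villatK_real_bound hr0 hr1 hz₁ hz₂
    have hm2 : 0 ≤ (μ₂ Set.univ).toReal := ENNReal.toReal_nonneg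
    have hK : (villatK r ((r / ‖z‖ : ℝ) : ℂ)).re - 1
        ≤ 4 * r * (1 - ‖z‖) / ((‖z‖ - r) * (1 - r) ^ 2) := by linarith
    calc ((villatK r ((r / ‖z‖ : ℝ) : ℂ)).re - 1) * (μ₂ Set.univ).toReal
        ≤ (4 * r * (1 - ‖z‖) / ((‖z‖ - r) * (1 - r) ^ 2)) * (μ₂ Set.univ).toReal :=
          mul_le_mul_of_nonneg_right hK hm2
      _ = 4 * r * (1 - ‖z‖) * (μ₂ Set.univ).toReal / ((‖z‖ - r) * (1 - r) ^ 2) := by ring
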